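/- The two-variable logarithmic Mahler measures satisfy m(1 + y² − x·y) = m(1 + y² + x·y) = m(1 + x + y). -/

import Mathlib

noncomputable def logMahler2 (p : ℂ → ℂ → ℂ) : ℝ :=
  ∫ u in (0:ℝ)..1, ∫ v in (0:ℝ)..1,
    Real.log (‖(p (Complex.exp (2 * Real.pi * Complex.I * u))
      (Complex.exp (2 * Real.pi * Complex.I * v)))‖)

open MeasureTheory Real Set


noncomputable def EE (t : ℝ) : ℂ := Complex.exp (2 * Real.pi * Complex.I * t)

lemma EE_eq (t : ℝ) : EE t = Complex.exp ((2 * Real.pi * t : ℝ) * Complex.I) := by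
  unfold EE; congr 1; push_cast; ring

lemma abs_EE (t : ℝ) : ‖EE t‖ = 1 := by
  rw [EE_eq, Complex.norm_exp]; simp

lemma EE_add (s t : ℝ) : EE (s + t) = EE s * EE t := by
  unfold EE; rw [← Complex.exp_add]; push_cast; ring_nf

lemma EE_zero : EE 0 = 1 := by unfold EE; simp

lemma EE_mul_neg (t : ℝ) : EE t * EE (-t) = 1 := by
  rw [← EE_add]; simp [EE_zero]

lemma EE_per (t : ℝ) : EE (t + 1) = EE t := by
  rw [EE_add]
  have : EE 1 = 1 := by
    unfold EE; rw [Complex.exp_eq_one_iff]; exact ⟨1, by push_cast; ring⟩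
  rw [this, mul_one]

lemma EE_half (t : ℝ) : EE (t + 1/2) = - EE t := by
  rw [EE_add]
  have : EE (1/2) = -1 := by
    have h : (2 : ℂ) * Real.pi * Complex.I * ((1:ℝ)/2 : ℝ) = Real.pi * Complex.I := by
      push_cast; ring
    unfold EE; rw [h, Complex.exp_pi_mul_I]
  rw [this]; ring

lemma two_cos_eq (v : ℝ) : ((2 * Real.cos (2 * Real.pi * v) : ℝ) : ℂ) = EE v + EE (-v) := by
  rw [EE_eq, EE_eq, Complex.exp_mul_I, Complex.exp_mul_I]
  have h1 : ((2 * Real.pi * -v : ℝ) : ℂ) = -((2 * Real.pi * v : ℝ) : ℂ) := by push_cast; ring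
  rw [h1, Complex.cos_neg, Complex.sin_neg, ← Complex.ofReal_cos]
  push_cast
  ring



noncomputable def PP (u v : ℝ) : ℝ :=
  Real.log (‖((2 * Real.cos (2 * Real.pi * v) : ℝ) : ℂ) + EE u‖)

lemma fact1 (u v : ℝ) :
    Real.log (‖1 + EE v ^ 2 + EE u * EE v‖) = PP u v := by
  have h : 1 + EE v ^ 2 + EE u * EE v
      = EE v * (((2 * Real.cos (2 * Real.pi * v) : ℝ) : ℂ) + EE u) := by
    rw [two_cos_eq, mul_add, mul_add, EE_mul_neg]; ring
  rw [h, norm_mul, abs_EE, one_mul]; rfl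

lemma fact2 (u v : ℝ) :
    Real.log (‖1 + EE u + EE (2 * v)‖) = PP (u - v) v := by
  have h2 : EE v * EE (u - v) = EE u := by rw [← EE_add]; ring_nf
  have hv2 : EE v * EE v = EE (2 * v) := by rw [← EE_add]; ring_nf
  have h : 1 + EE u + EE (2 * v)
      = EE v * (((2 * Real.cos (2 * Real.pi * v) : ℝ) : ℂ) + EE (u - v)) := by
    rw [two_cos_eq, mul_add, mul_add, EE_mul_neg, h2, hv2]; ring
  rw [h, norm_mul, abs_EE, one_mul]; rfl



lemma PP_bound {u : ℝ} (h : Real.sin (2 * Real.pi * u) ≠ 0) (v : ℝ) :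
    |PP u v| ≤ Real.log 3 - Real.log |Real.sin (2 * Real.pi * u)| := by
  set z := ((2 * Real.cos (2 * Real.pi * v) : ℝ) : ℂ) + EE u with hz_def
  have him : z.im = Real.sin (2 * Real.pi * u) := by
    rw [hz_def, Complex.add_im, Complex.ofReal_im, EE_eq, Complex.exp_ofReal_mul_I_im,
      zero_add]
  have h1 : |Real.sin (2 * Real.pi * u)| ≤ ‖z‖ := by
    rw [← him]; exact Complex.abs_im_le_norm z
  have h2 : ‖z‖ ≤ 3 := by
    refine (norm_add_le _ _).trans ?_
    rw [abs_EE, Complex.norm_real, Real.norm_eq_abs, abs_mul]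
    have := Real.abs_cos_le_one (2 * Real.pi * v)
    rw [abs_two]
    nlinarith
  have hpos : 0 < |Real.sin (2 * Real.pi * u)| := abs_pos.2 h
  have hzpos : 0 < ‖z‖ := lt_of_lt_of_le hpos h1
  have hsle : |Real.sin (2 * Real.pi * u)| ≤ 1 :=
    abs_le.2 ⟨Real.neg_one_le_sin _, Real.sin_le_one _⟩
  have hlog1 : Real.log |Real.sin (2 * Real.pi * u)| ≤ 0 :=
    Real.log_nonpos (abs_nonneg _) hsle
  have hlog3 : (0:ℝ) ≤ Real.log 3 := Real.log_nonneg (by norm_num)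
  have hle1 : Real.log |Real.sin (2 * Real.pi * u)| ≤ Real.log (‖z‖) :=
    Real.log_le_log hpos h1
  have hle2 : Real.log (‖z‖) ≤ Real.log 3 :=
    Real.log_le_log hzpos h2
  have : PP u v = Real.log (‖z‖) := rfl
  rw [this, abs_le]
  constructor <;> linarith



lemma neg_log_le {t : ℝ} (ht : 0 < t) : -Real.log t ≤ 2 * t ^ (-(1:ℝ)/2) := by
  have hw : (0:ℝ) < t ^ ((1:ℝ)/2) := Real.rpow_pos_of_pos ht _
  have hlog : Real.log (t ^ ((1:ℝ)/2)) = (1/2) * Real.log t := by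
    rw [Real.log_rpow ht]
  have h2 : Real.log ((t ^ ((1:ℝ)/2))⁻¹) ≤ (t ^ ((1:ℝ)/2))⁻¹ - 1 :=
    Real.log_le_sub_one_of_pos (inv_pos.2 hw)
  rw [Real.log_inv, hlog] at h2
  have hrw : t ^ (-(1:ℝ)/2) = (t ^ ((1:ℝ)/2))⁻¹ := by
    rw [← Real.rpow_neg ht.le]; norm_num
  have hinv : (0:ℝ) < (t ^ ((1:ℝ)/2))⁻¹ := inv_pos.2 hw
  rw [hrw]; linarith

noncomputable def LL (t : ℝ) : ℝ := Real.log |Real.sin (2 * Real.pi * t)|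

lemma LL_meas : Measurable LL :=
  Real.measurable_log.comp
    ((continuous_abs.comp (Real.continuous_sin.comp (continuous_const.mul continuous_id))).measurable)

lemma LL1 : IntervalIntegrable LL volume 0 (1/4) := by
  refine IntervalIntegrable.mono_fun
    ((intervalIntegral.intervalIntegrable_rpow' (by norm_num : (-1:ℝ) < -(1:ℝ)/2)).const_mul 2)
    LL_meas.aestronglyMeasurable ?_
  rw [Filter.EventuallyLE, ae_restrict_iff' measurableSet_uIoc]
  filter_upwards with t ht
  rw [uIoc_of_le (by norm_num : (0:ℝ) ≤ 1/4)] at ht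
  obtain ⟨ht0, ht4⟩ := ht
  have hpi := Real.pi_pos
  have h4 : 4 * t ≤ Real.sin (2 * Real.pi * t) := by
    have h := Real.mul_le_sin (x := 2 * Real.pi * t) (by positivity) (by nlinarith)
    calc 4 * t = 2 / Real.pi * (2 * Real.pi * t) := by field_simp; ring
    _ ≤ _ := h
  have hspos : 0 < Real.sin (2 * Real.pi * t) := by linarith
  have hs1 : Real.sin (2 * Real.pi * t) ≤ 1 := Real.sin_le_one _
  have habs : |Real.sin (2 * Real.pi * t)| = Real.sin (2 * Real.pi * t) := abs_of_pos hspos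
  have hlog_le : Real.log (4 * t) ≤ Real.log (Real.sin (2 * Real.pi * t)) :=
    Real.log_le_log (by linarith) h4
  have hsplit : Real.log (4 * t) = Real.log 4 + Real.log t :=
    Real.log_mul (by norm_num) (ne_of_gt ht0)
  have hlog4 : (0:ℝ) ≤ Real.log 4 := Real.log_nonneg (by norm_num)
  have hLL : ‖LL t‖ = -Real.log (Real.sin (2 * Real.pi * t)) := by
    rw [Real.norm_eq_abs]
    unfold LL
    rw [habs, abs_of_nonpos (Real.log_nonpos hspos.le hs1)]
  have hnl := neg_log_le ht0
  have hrn : (0:ℝ) ≤ t ^ (-(1:ℝ)/2) := Real.rpow_nonneg ht0.le _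
  rw [hLL, Real.norm_eq_abs, abs_of_nonneg (by linarith : (0:ℝ) ≤ 2 * t ^ (-(1:ℝ)/2))]
  linarith

lemma LL_sym (t : ℝ) : LL (1/2 - t) = LL t := by
  unfold LL
  rw [show 2 * Real.pi * (1/2 - t) = Real.pi - 2 * Real.pi * t by ring, Real.sin_pi_sub]

lemma LL2 : IntervalIntegrable LL volume (1/4) (1/2) := by
  have h := LL1.comp_sub_left (1/2)
  rw [funext LL_sym] at h
  norm_num at h
  exact h.symm

lemma LL0 : IntervalIntegrable LL volume 0 (1/2) := LL1.trans LL2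

lemma LL_per : Function.Periodic LL (1/2) := by
  intro t
  unfold LL
  rw [show 2 * Real.pi * (t + 1/2) = 2 * Real.pi * t + Real.pi by ring, Real.sin_add_pi, abs_neg]

theorem per_ii {f : ℝ → ℝ} {T : ℝ} (hT : 0 < T) (hp : Function.Periodic f T)
    (h0 : IntervalIntegrable f volume 0 T) (a b : ℝ) : IntervalIntegrable f volume a b := by
  have step : ∀ n : ℤ, IntervalIntegrable f volume (n * T) (n * T + T) := by
    intro n
    have h1 := h0.comp_sub_right (n * T)
    have heq : (fun x => f (x - (n:ℝ) * T)) = f := funext fun x => hp.sub_int_mul_eq n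
    rw [heq] at h1
    rw [zero_add, add_comm T ((n:ℝ) * T)] at h1
    exact h1
  have step2 : ∀ (n : ℤ) (k : ℕ), IntervalIntegrable f volume (n * T) ((n + k) * T) := by
    intro n k
    induction k with
    | zero => simp
    | succ k ih =>
      have h2 := step (n + k)
      have he : ((n:ℝ) + (k:ℕ)) * T + T = ((n + ((k:ℕ)+1:ℕ) : ℤ) : ℝ) * T := by
        push_cast; ring
      have he2 : (((n + (k:ℕ) : ℤ)) : ℝ) * T = ((n:ℝ) + (k:ℕ)) * T := by push_cast; ring
      rw [he2, he] at h2
      refine ih.trans ?_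
      have he3 : (((n + (k:ℕ) : ℤ)) : ℝ) * T = ((n:ℝ) + (k:ℕ)) * T := by push_cast; ring
      convert h2 using 2 <;> push_cast <;> ring
  set n : ℤ := ⌊min a b / T⌋ with hn_def
  have hn : (n : ℝ) * T ≤ min a b := by
    rw [← le_div_iff₀ hT]
    exact Int.floor_le _
  obtain ⟨k, hk⟩ : ∃ k : ℕ, max a b ≤ ((n:ℝ) + k) * T := by
    obtain ⟨k, hk⟩ := exists_nat_ge (max a b / T - n)
    refine ⟨k, ?_⟩
    rw [← div_le_iff₀ hT]
    linarith
  refine (step2 n k).mono_set ?_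
  have hsub : Set.uIcc a b ⊆ Set.Icc ((n:ℝ) * T) (((n:ℝ) + k) * T) := by
    rw [Set.uIcc]
    intro x hx
    simp only [Set.mem_Icc] at hx ⊢
    constructor
    · calc (n:ℝ) * T ≤ min a b := hn
        _ ≤ x := by simpa [min_def] using hx.1
    · calc x ≤ max a b := by simpa [max_def] using hx.2
        _ ≤ _ := hk
  refine hsub.trans ?_
  rw [Set.uIcc_of_le (by nlinarith [hn.trans ((min_le_max).trans hk)] : (n:ℝ) * T ≤ ((n:ℝ)+k) * T)]

noncomputable def DD (t : ℝ) : ℝ := Real.log 3 - LL t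

lemma DD_nonneg (t : ℝ) : 0 ≤ DD t := by
  unfold DD LL
  have h1 : Real.log |Real.sin (2 * Real.pi * t)| ≤ 0 :=
    Real.log_nonpos (abs_nonneg _) (Real.abs_sin_le_one _)
  have h2 : (0:ℝ) ≤ Real.log 3 := Real.log_nonneg (by norm_num)
  linarith

lemma DD_ii (a b : ℝ) : IntervalIntegrable DD volume a b :=
  (intervalIntegrable_const).sub (per_ii (by norm_num) LL_per LL0 a b)

lemma DD_per : Function.Periodic DD 1 := by
  have h := (LL_per.nsmul 2)
  have : (2 : ℕ) • (1/2 : ℝ) = 1 := by norm_num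
  rw [this] at h
  intro t
  unfold DD
  rw [h t]

lemma DD_meas : Measurable DD := measurable_const.sub LL_meas




noncomputable def mu01 : Measure ℝ := volume.restrict (Set.Ioc 0 1)

instance : IsFiniteMeasure mu01 := by
  constructor
  rw [mu01, Measure.restrict_apply_univ]
  simp [Real.volume_Ioc]

lemma cnull {s : Set ℝ} (hs : s.Countable) : mu01 s = 0 := by
  rw [mu01, Measure.restrict_apply hs.measurableSet]
  exact measure_mono_null Set.inter_subset_left (hs.measure_zero volume)

lemma sin_zero_countable (c : ℝ) :
    {u : ℝ | Real.sin (2 * Real.pi * u) = 0} ⊆ Set.range (fun n : ℤ => (n : ℝ) / 2) := by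
  intro u hu
  rw [Set.mem_setOf_eq, Real.sin_eq_zero_iff] at hu
  obtain ⟨n, hn⟩ := hu
  refine ⟨n, ?_⟩
  have h2 : (n : ℝ) * Real.pi = (2 * u) * Real.pi := by linarith
  have h3 := mul_right_cancel₀ Real.pi_ne_zero h2
  linarith

lemma PP_cont : Continuous (fun p : ℝ × ℝ =>
    ‖((2 * Real.cos (2 * Real.pi * p.2) : ℝ) : ℂ) + EE p.1‖) := by
  apply continuous_norm.comp
  apply Continuous.add
  · exact Complex.continuous_ofReal.comp
      ((continuous_const.mul (Real.continuous_cos.comp (continuous_const.mul continuous_snd))))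
  · exact Complex.continuous_exp.comp
      (continuous_const.mul (Complex.continuous_ofReal.comp continuous_fst))

lemma PP_meas : Measurable (fun p : ℝ × ℝ => PP p.1 p.2) :=
  Real.measurable_log.comp PP_cont.measurable

lemma DD_int : Integrable DD mu01 := (DD_ii 0 1).1

lemma HP : Integrable (fun p : ℝ × ℝ => PP p.1 p.2) (mu01.prod mu01) := by
  have hDD : Integrable (fun p : ℝ × ℝ => DD p.1) (mu01.prod mu01) := by
    simpa using DD_int.mul_prod (integrable_const (1:ℝ))
  refine hDD.mono PP_meas.aestronglyMeasurable ?_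
  rw [ae_iff]
  refine measure_mono_null (fun p hp => ?_)
    (show (mu01.prod mu01) ({u : ℝ | Real.sin (2 * Real.pi * u) = 0} ×ˢ Set.univ) = 0 by
      rw [Measure.prod_prod, cnull ((Set.countable_range _).mono (sin_zero_countable 0))]
      · exact zero_mul _)
  simp only [Set.mem_setOf_eq, not_le] at hp
  constructor
  · by_contra hs
    rw [Set.mem_setOf_eq] at hs
    have := PP_bound hs p.2
    simp only [Real.norm_eq_abs] at hp
    unfold DD LL at hp
    linarith [le_abs_self (Real.log 3 - Real.log |Real.sin (2 * Real.pi * p.1)|)]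
  · trivial




lemma DDshift_int : Integrable (fun p : ℝ × ℝ => DD (p.1 - p.2)) (mu01.prod mu01) := by
  have hsm : AEStronglyMeasurable (fun p : ℝ × ℝ => DD (p.1 - p.2)) (mu01.prod mu01) :=
    (DD_meas.comp (measurable_fst.sub measurable_snd)).aestronglyMeasurable
  refine (integrable_prod_iff hsm).2 ⟨Filter.Eventually.of_forall fun u => ?_, ?_⟩
  · have h := (DD_ii u (u - 1)).comp_sub_left u
    simp only [sub_self, sub_sub_cancel] at h
    exact h.1
  · have heq : (fun u : ℝ => ∫ v, ‖DD (u - v)‖ ∂mu01) = fun _ => ∫ x in (0:ℝ)..1, DD x := by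
      funext u
      have h1 : ∀ v : ℝ, ‖DD (u - v)‖ = DD (u - v) := fun v => by
        rw [Real.norm_eq_abs, abs_of_nonneg (DD_nonneg _)]
      calc (∫ v, ‖DD (u - v)‖ ∂mu01) = ∫ v, DD (u - v) ∂mu01 :=
            integral_congr_ae (Filter.Eventually.of_forall fun v => h1 v)
        _ = ∫ v in (0:ℝ)..1, DD (u - v) := by
            rw [intervalIntegral.integral_of_le (by norm_num : (0:ℝ) ≤ 1)]; rfl
        _ = ∫ x in (u - 1)..(u - 0), DD x := intervalIntegral.integral_comp_sub_left DD u
        _ = ∫ x in (0:ℝ)..1, DD x := by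
            rw [sub_zero]
            have h2 := DD_per.intervalIntegral_add_eq (u - 1) 0
            simpa using h2
    rw [heq]
    exact integrable_const _

lemma HG : Integrable (fun p : ℝ × ℝ => PP (p.1 - p.2) p.2) (mu01.prod mu01) := by
  have hmeas : Measurable (fun p : ℝ × ℝ => PP (p.1 - p.2) p.2) := by
    have h : (fun p : ℝ × ℝ => PP (p.1 - p.2) p.2)
        = (fun p : ℝ × ℝ => PP p.1 p.2) ∘ (fun p => (p.1 - p.2, p.2)) := rfl
    rw [h]
    exact PP_meas.comp ((measurable_fst.sub measurable_snd).prodMk measurable_snd)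
  refine DDshift_int.mono hmeas.aestronglyMeasurable ?_
  rw [ae_iff]
  have hbadm : MeasurableSet {p : ℝ × ℝ | Real.sin (2 * Real.pi * (p.1 - p.2)) = 0} := by
    have h : Measurable fun p : ℝ × ℝ => Real.sin (2 * Real.pi * (p.1 - p.2)) :=
      Real.measurable_sin.comp (measurable_const.mul (measurable_fst.sub measurable_snd))
    exact h (measurableSet_singleton 0)
  have hbad : (mu01.prod mu01) {p : ℝ × ℝ | Real.sin (2 * Real.pi * (p.1 - p.2)) = 0} = 0 := by
    rw [Measure.measure_prod_null hbadm]
    refine Filter.Eventually.of_forall fun u => ?_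
    refine measure_mono_null ?_ (cnull (Set.countable_range (fun n : ℤ => u - (n:ℝ)/2)))
    intro v hv
    have hv2 : u - v ∈ {w : ℝ | Real.sin (2 * Real.pi * w) = 0} := hv
    obtain ⟨n, hn⟩ := sin_zero_countable 0 hv2
    exact ⟨n, by dsimp at hn ⊢; linarith⟩
  refine measure_mono_null (fun p hp => ?_) hbad
  simp only [Set.mem_setOf_eq, not_le] at hp
  by_contra hs
  rw [Set.mem_setOf_eq] at hs
  have hb := PP_bound hs p.2
  simp only [Real.norm_eq_abs] at hp
  unfold DD LL at hp
  linarith [le_abs_self (Real.log 3 - Real.log |Real.sin (2 * Real.pi * (p.1 - p.2))|)]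




lemma PP_per (v : ℝ) : Function.Periodic (fun u => PP u v) 1 := fun u => by
  dsimp only; unfold PP; rw [EE_per]

lemma doubling {g : ℝ → ℝ} (hg : Function.Periodic g 1) :
    ∫ v in (0:ℝ)..1, g (2 * v) = ∫ v in (0:ℝ)..1, g v := by
  by_cases hint : IntervalIntegrable g volume 0 1
  · have h12 : IntervalIntegrable g volume 1 2 := by
      have h := hint.comp_sub_right 1
      have he : (fun x => g (x - 1)) = g := funext fun x => hg.sub_eq x
      rw [he, zero_add] at h
      convert h using 2
      norm_num
    have hsplit : (∫ v in (0:ℝ)..1, g v) + ∫ v in (1:ℝ)..2, g v = ∫ v in (0:ℝ)..2, g v :=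
      intervalIntegral.integral_add_adjacent_intervals hint h12
    have hper : (∫ v in (1:ℝ)..2, g v) = ∫ v in (0:ℝ)..1, g v := by
      have h := hg.intervalIntegral_add_eq 1 0
      norm_num at h
      exact h
    have hcomp : (∫ v in (0:ℝ)..1, g (2 * v))
        = (2:ℝ)⁻¹ • ∫ v in (2*(0:ℝ))..(2*1), g v := by
      exact intervalIntegral.integral_comp_mul_left g (by norm_num : (2:ℝ) ≠ 0)
    rw [hcomp]
    norm_num
    rw [← hsplit, hper]
    ring
  · have hnc : ¬ IntervalIntegrable (fun v => g (2 * v)) volume 0 1 := by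
      intro hc
      apply hint
      have hc' : IntervalIntegrable (fun x => g (2 * x)) volume (0/2) (2/2) := by
        norm_num
        exact hc
      have h02 : IntervalIntegrable g volume 0 2 :=
        (IntervalIntegrable.comp_mul_left_iff (by norm_num : (2:ℝ) ≠ 0)).1 hc'
      refine h02.mono_set ?_
      rw [Set.uIcc_of_le (by norm_num : (0:ℝ) ≤ 1), Set.uIcc_of_le (by norm_num : (0:ℝ) ≤ 2)]
      exact Set.Icc_subset_Icc le_rfl (by norm_num)
    rw [intervalIntegral.integral_undef hnc, intervalIntegral.integral_undef hint]

lemma shift_eq (v : ℝ) : (∫ u in (0:ℝ)..1, PP (u - v) v) = ∫ u in (0:ℝ)..1, PP u v := by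
  rw [intervalIntegral.integral_comp_sub_right (fun u => PP u v) v]
  have h2 : (1:ℝ) - v = (0 - v) + 1 := by ring
  rw [h2]
  have h3 := (PP_per v).intervalIntegral_add_eq (0 - v) 0
  simpa using h3

lemma key : (∫ u in (0:ℝ)..1, ∫ v in (0:ℝ)..1, PP (u - v) v)
    = ∫ u in (0:ℝ)..1, ∫ v in (0:ℝ)..1, PP u v := by
  have h01 : (0:ℝ) ≤ 1 := by norm_num
  simp only [intervalIntegral.integral_of_le h01]
  calc (∫ u, (∫ v, PP (u - v) v ∂mu01) ∂mu01)
      = ∫ v, (∫ u, PP (u - v) v ∂mu01) ∂mu01 :=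
        integral_integral_swap (f := fun u v => PP (u - v) v) HG
    _ = ∫ v, (∫ u, PP u v ∂mu01) ∂mu01 := by
        refine integral_congr_ae (Filter.Eventually.of_forall fun v => ?_)
        have h := shift_eq v
        rw [intervalIntegral.integral_of_le h01, intervalIntegral.integral_of_le h01] at h
        exact h
    _ = ∫ u, (∫ v, PP u v ∂mu01) ∂mu01 :=
        (integral_integral_swap (f := fun u v => PP u v) HP).symm






theorem part1 : logMahler2 (fun x y => 1 + y ^ 2 - x * y) = logMahler2 (fun x y => 1 + y ^ 2 + x * y) := by
  show (∫ u in (0:ℝ)..1, ∫ v in (0:ℝ)..1, Real.log (‖1 + EE v ^ 2 - EE u * EE v‖))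
      = ∫ u in (0:ℝ)..1, ∫ v in (0:ℝ)..1, Real.log (‖1 + EE v ^ 2 + EE u * EE v‖)
  refine intervalIntegral.integral_congr fun u _ => ?_
  have hper : Function.Periodic (fun w => Real.log (‖1 + EE w ^ 2 - EE u * EE w‖)) 1 :=
    fun w => by dsimp only; rw [EE_per]
  have hrw : ∀ v : ℝ, Real.log (‖1 + EE v ^ 2 + EE u * EE v‖)
      = (fun w => Real.log (‖1 + EE w ^ 2 - EE u * EE w‖)) (v + 1/2) := by
    intro v
    dsimp only
    rw [EE_half]
    ring_nf
  calc (∫ v in (0:ℝ)..1, Real.log (‖1 + EE v ^ 2 - EE u * EE v‖))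
      = ∫ v in (0:ℝ)..1,
          (fun w => Real.log (‖1 + EE w ^ 2 - EE u * EE w‖)) v := rfl
    _ = ∫ v in (1/2 : ℝ)..(1/2 + 1),
          (fun w => Real.log (‖1 + EE w ^ 2 - EE u * EE w‖)) v := by
        have h := hper.intervalIntegral_add_eq (1/2) 0
        simpa using h.symm
    _ = ∫ v in (0:ℝ)..1,
          (fun w => Real.log (‖1 + EE w ^ 2 - EE u * EE w‖)) (v + 1/2) := by
        rw [intervalIntegral.integral_comp_add_right
          (fun w => Real.log (‖1 + EE w ^ 2 - EE u * EE w‖)) (1/2)]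
        norm_num
    _ = ∫ v in (0:ℝ)..1, Real.log (‖1 + EE v ^ 2 + EE u * EE v‖) :=
        intervalIntegral.integral_congr fun v _ => (hrw v).symm

theorem part2 : logMahler2 (fun x y => 1 + y ^ 2 + x * y) = logMahler2 (fun x y => 1 + x + y) := by
  show (∫ u in (0:ℝ)..1, ∫ v in (0:ℝ)..1, Real.log (‖1 + EE v ^ 2 + EE u * EE v‖))
      = ∫ u in (0:ℝ)..1, ∫ v in (0:ℝ)..1, Real.log (‖1 + EE u + EE v‖)
  have hL : (∫ u in (0:ℝ)..1, ∫ v in (0:ℝ)..1, Real.log (‖1 + EE v ^ 2 + EE u * EE v‖))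
      = ∫ u in (0:ℝ)..1, ∫ v in (0:ℝ)..1, PP u v :=
    intervalIntegral.integral_congr fun u _ =>
      intervalIntegral.integral_congr fun v _ => fact1 u v
  have hR : (∫ u in (0:ℝ)..1, ∫ v in (0:ℝ)..1, Real.log (‖1 + EE u + EE v‖))
      = ∫ u in (0:ℝ)..1, ∫ v in (0:ℝ)..1, PP (u - v) v := by
    refine intervalIntegral.integral_congr fun u _ => ?_
    have hper : Function.Periodic (fun v => Real.log (‖1 + EE u + EE v‖)) 1 :=
      fun w => by dsimp only; rw [EE_per]
    have hd := doubling hper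
    rw [← hd]
    exact intervalIntegral.integral_congr fun v _ => fact2 u v
  rw [hL, hR, key]


theorem stmt19 :
    logMahler2 (fun x y => 1 + y ^ 2 - x * y) = logMahler2 (fun x y => 1 + y ^ 2 + x * y) ∧
    logMahler2 (fun x y => 1 + y ^ 2 + x * y) = logMahler2 (fun x y => 1 + x + y) :=
  ⟨part1, part2⟩
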